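/- arXiv:0905.1861 — 3 statements merged into one kernel-verified Lean document; each statement's English description precedes it below -/
import Mathlib

section
/- Let Ω ⊆ ℍ be an axially symmetric s-domain and let f : Ω → ℍ be slice regular. Then for every J ∈ 𝕊 and every q = x+yI ∈ Ω (with x, y ∈ ℝ and I ∈ 𝕊), one has f(x+yI) = (1/2)·(f(x+yJ) + f(x−yJ)) + I·(1/2)·(J·(f(x−yJ) − f(x+yJ))). -/
open Quaternion

noncomputable section

/-- The 2-sphere of imaginary units in the quaternions. -/
def SpH : Set ℍ[ℝ] := {q | q.re = 0 ∧ ‖q‖ = 1}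

/-- The slice (complex plane) `L_I = {x + y I : x, y ∈ ℝ}`. -/
def sliceL (I : ℍ[ℝ]) : Set ℍ[ℝ] := {q | ∃ x y : ℝ, q = (x : ℍ[ℝ]) + y • I}

/-- `f` has continuous partial derivatives on the `I`-slice part of `Ω` and satisfies the
Cauchy–Riemann equation `∂f/∂x + I ∂f/∂y = 0` there. -/
def SliceHolomorphicOn (I : ℍ[ℝ]) (f : ℍ[ℝ] → ℍ[ℝ]) (Ω : Set ℍ[ℝ]) : Prop :=
  ∃ fx fy : ℝ → ℝ → ℍ[ℝ],
    (∀ x y : ℝ, (x : ℍ[ℝ]) + y • I ∈ Ω →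
      HasDerivAt (fun t : ℝ => f ((t : ℍ[ℝ]) + y • I)) (fx x y) x) ∧
    (∀ x y : ℝ, (x : ℍ[ℝ]) + y • I ∈ Ω →
      HasDerivAt (fun t : ℝ => f ((x : ℍ[ℝ]) + t • I)) (fy x y) y) ∧
    ContinuousOn (fun p : ℝ × ℝ => fx p.1 p.2) {p : ℝ × ℝ | (p.1 : ℍ[ℝ]) + p.2 • I ∈ Ω} ∧
    ContinuousOn (fun p : ℝ × ℝ => fy p.1 p.2) {p : ℝ × ℝ | (p.1 : ℍ[ℝ]) + p.2 • I ∈ Ω} ∧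
    ∀ x y : ℝ, (x : ℍ[ℝ]) + y • I ∈ Ω → fx x y + I * fy x y = 0

/-- `f` is slice regular on `Ω`. -/
def SliceRegularOn (f : ℍ[ℝ] → ℍ[ℝ]) (Ω : Set ℍ[ℝ]) : Prop :=
  ∀ I ∈ SpH, SliceHolomorphicOn I f Ω

/-- `Ω` is axially symmetric. -/
def AxSymm (Ω : Set ℍ[ℝ]) : Prop :=
  ∀ (x y : ℝ), ∀ I ∈ SpH, (x : ℍ[ℝ]) + y • I ∈ Ω → ∀ J ∈ SpH, (x : ℍ[ℝ]) + y • J ∈ Ω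

/-- `Ω` is an s-domain: a domain meeting the real axis whose slices are connected. -/
def IsSDomain (Ω : Set ℍ[ℝ]) : Prop :=
  IsOpen Ω ∧ IsConnected Ω ∧ (∃ x : ℝ, (x : ℍ[ℝ]) ∈ Ω) ∧
    ∀ I ∈ SpH, IsConnected (Ω ∩ sliceL I)

/-- The axially symmetric completion of a set `S ⊆ ℍ`. -/
def symmComp (S : Set ℍ[ℝ]) : Set ℍ[ℝ] :=
  {q | ∃ (x y : ℝ) (I : ℍ[ℝ]), I ∈ SpH ∧ q = (x : ℍ[ℝ]) + y • I ∧
    ∃ J ∈ SpH, (x : ℍ[ℝ]) + y • J ∈ S}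

/-- A domain of the slice `L_I`: a nonempty connected relatively open subset of `L_I`. -/
def IsSliceDomain (I : ℍ[ℝ]) (D : Set ℍ[ℝ]) : Prop :=
  D ⊆ sliceL I ∧ IsConnected D ∧ IsOpen {p : ℝ × ℝ | (p.1 : ℍ[ℝ]) + p.2 • I ∈ D}

section quat
variable {I : ℍ[ℝ]}

lemma SpH.normSq' (hI : I ∈ SpH) : I.imI ^ 2 + I.imJ ^ 2 + I.imK ^ 2 = 1 := by
  have h1 : Quaternion.normSq I = 1 := by
    rw [Quaternion.normSq_eq_norm_mul_self, hI.2, one_mul]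
  have h2 := Quaternion.normSq_def' I
  rw [h1, hI.1] at h2
  linarith [h2]

lemma SpH.mul_self (hI : I ∈ SpH) : I * I = -1 := by
  have h := SpH.normSq' hI
  have h0 := hI.1
  ext <;>
    simp only [Quaternion.re_mul, Quaternion.imI_mul, Quaternion.imJ_mul, Quaternion.imK_mul,
      Quaternion.re_neg, Quaternion.imI_neg, Quaternion.imJ_neg, Quaternion.imK_neg,
      Quaternion.re_one, Quaternion.imI_one, Quaternion.imJ_one, Quaternion.imK_one, h0] <;>
    first
      | ring1
      | linear_combination -h


lemma SpH.neg (hI : I ∈ SpH) : -I ∈ SpH := by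
  refine ⟨by simp [hI.1], by simp [hI.2]⟩

lemma SpH.norm_mix (hI : I ∈ SpH) (x y : ℝ) : ‖(x : ℍ[ℝ]) + y • I‖ = Real.sqrt (x^2 + y^2) := by
  have h := SpH.normSq' hI
  have h0 := hI.1
  have hn : Quaternion.normSq ((x : ℍ[ℝ]) + y • I) = x^2 + y^2 := by
    rw [Quaternion.normSq_def']
    simp only [Quaternion.re_add, Quaternion.imI_add, Quaternion.imJ_add, Quaternion.imK_add,
      Quaternion.re_coe, Quaternion.imI_coe, Quaternion.imJ_coe, Quaternion.imK_coe,
      Quaternion.re_smul, Quaternion.imI_smul, Quaternion.imJ_smul, Quaternion.imK_smul,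
      smul_eq_mul, h0]
    linear_combination (y^2) * h
  have h3 := Quaternion.normSq_eq_norm_mul_self ((x : ℍ[ℝ]) + y • I)
  rw [hn] at h3
  rw [show x^2+y^2 = ‖(x : ℍ[ℝ]) + y • I‖ * ‖(x : ℍ[ℝ]) + y • I‖ from h3]
  rw [Real.sqrt_mul_self (norm_nonneg _)]

lemma SpH.re_mul (hI : I ∈ SpH) (x y : ℝ) : (((x : ℍ[ℝ]) + y • I) * I).re = -y := by
  have h := SpH.normSq' hI
  have h0 := hI.1
  simp only [Quaternion.re_mul, Quaternion.re_add, Quaternion.imI_add, Quaternion.imJ_add,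
    Quaternion.imK_add, Quaternion.re_coe, Quaternion.imI_coe, Quaternion.imJ_coe,
    Quaternion.imK_coe, Quaternion.re_smul, Quaternion.imI_smul, Quaternion.imJ_smul,
    Quaternion.imK_smul, smul_eq_mul, h0]
  linear_combination (-y) * h
end quat

open Quaternion in
/-- Bundled imaginary unit. -/
def Sp : Type := {q : ℍ[ℝ] // q ∈ SpH}

/-- Type synonym for `ℍ` carrying the complex structure of the slice `L_I`. -/
def HS (_I : Sp) : Type := ℍ[ℝ]

namespace HS
open Quaternion
variable (I : Sp)

instance : NormedAddCommGroup (HS I) := inferInstanceAs (NormedAddCommGroup ℍ[ℝ])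
instance : NormedSpace ℝ (HS I) := inferInstanceAs (NormedSpace ℝ ℍ[ℝ])
instance : CompleteSpace (HS I) := inferInstanceAs (CompleteSpace ℍ[ℝ])

/-- Identity map into the synonym. -/
def of : ℍ[ℝ] → HS I := id

/-- Identity map out of the synonym. -/
def out : HS I → ℍ[ℝ] := id

/-- Embedding of `ℂ` into the slice. -/
def emb (c : ℂ) : ℍ[ℝ] := (c.re : ℍ[ℝ]) + c.im • I.1

lemma emb_add (c d : ℂ) : emb I (c + d) = emb I c + emb I d := by
  simp only [emb, Complex.add_re, Complex.add_im, Quaternion.coe_add, add_smul]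
  abel

lemma emb_mul (c d : ℂ) : emb I (c * d) = emb I c * emb I d := by
  have h2 : I.1 * I.1 = -1 := SpH.mul_self I.2
  simp only [emb, Complex.mul_re, Complex.mul_im]
  rw [add_mul, mul_add, mul_add, smul_mul_assoc, smul_mul_assoc, mul_smul_comm,
    mul_smul_comm, h2, smul_smul]
  ext <;> simp <;> ring

lemma norm_emb (c : ℂ) : ‖emb I c‖ = ‖c‖ := by
  rw [emb, SpH.norm_mix I.2, Complex.norm_def, Complex.normSq_apply]
  ring_nf

instance : SMul ℂ (HS I) := ⟨fun c q => of I (emb I c * out I q)⟩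

lemma smul_def (c : ℂ) (q : HS I) : c • q = of I (emb I c * out I q) := rfl

lemma of_add (a b : ℍ[ℝ]) : of I (a + b) = of I a + of I b := rfl
lemma of_zero : of I 0 = 0 := rfl
lemma out_of (a : ℍ[ℝ]) : out I (of I a) = a := rfl

instance : Module ℂ (HS I) where
  one_smul q := by
    rw [smul_def]
    show of I (emb I 1 * out I q) = of I (out I q)
    simp [emb]
  mul_smul c d q := by
    simp only [smul_def, emb_mul, out_of, mul_assoc]
  smul_zero c := by
    rw [smul_def]
    show of I (emb I c * 0) = of I 0
    rw [mul_zero]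
  smul_add c q r := by
    simp only [smul_def]
    show of I (emb I c * (out I q + out I r)) = of I (emb I c * out I q + emb I c * out I r)
    rw [mul_add]
  add_smul c d q := by
    simp only [smul_def, emb_add]
    show of I ((emb I c + emb I d) * out I q) = of I (emb I c * out I q + emb I d * out I q)
    rw [add_mul]
  zero_smul q := by
    rw [smul_def]
    show of I (emb I 0 * out I q) = of I 0
    simp [emb]

lemma norm_of (a : ℍ[ℝ]) : ‖of I a‖ = ‖a‖ := rfl

instance : NormedSpace ℂ (HS I) where
  norm_smul_le c q := by
    rw [smul_def, norm_of, norm_mul, norm_emb]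
    exact le_of_eq rfl

instance : IsScalarTower ℝ ℂ (HS I) := by
  constructor
  intro r c q
  rw [smul_def, smul_def]
  have h1 : emb I (r • c) = r • emb I c := by
    simp only [emb, Complex.smul_re, Complex.smul_im, smul_eq_mul, smul_smul]
    ext <;> simp [mul_add] <;> ring
  rw [h1]
  show of I (r • emb I c * out I q) = r • of I (emb I c * out I q)
  rw [smul_mul_assoc]
  rfl

lemma I_smul (q : HS I) : (Complex.I : ℂ) • q = of I (I.1 * out I q) := by
  rw [smul_def]
  simp [emb]

end HS

section CR
open Complex Asymptotics Filter Topology Set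

lemma abs_sub_le_of_mem_uIcc' {a c t : ℝ} (h : t ∈ Set.uIcc a c) : |t - a| ≤ |c - a| := by
  rcases le_total a c with hac | hac
  · rw [Set.uIcc_of_le hac] at h
    rw [_root_.abs_of_nonneg (by linarith [h.1] : (0:ℝ) ≤ t - a), _root_.abs_of_nonneg (by linarith : (0:ℝ) ≤ c - a)]
    linarith [h.2]
  · rw [Set.uIcc_of_ge hac] at h
    rw [_root_.abs_of_nonpos (by linarith [h.2] : t - a ≤ 0), _root_.abs_of_nonpos (by linarith : c - a ≤ 0)]
    linarith [h.1]

theorem cr_hasDerivAt {E : Type*} [NormedAddCommGroup E] [NormedSpace ℝ E] [NormedSpace ℂ E]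
    [IsScalarTower ℝ ℂ E]
    {V : Set ℂ} (hV : IsOpen V) {G Gx Gy : ℂ → E}
    (hGx : ∀ z ∈ V, HasDerivAt (fun t : ℝ => G ⟨t, z.im⟩) (Gx z) z.re)
    (hGy : ∀ z ∈ V, HasDerivAt (fun t : ℝ => G ⟨z.re, t⟩) (Gy z) z.im)
    (hGxc : ContinuousOn Gx V)
    (hCR : ∀ z ∈ V, Gy z = Complex.I • Gx z)
    {z₀ : ℂ} (hz₀ : z₀ ∈ V) : HasDerivAt G (Gx z₀) z₀ := by
  rw [hasDerivAt_iff_isLittleO]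
  have key : (fun z : ℂ => G z - G z₀ - (z - z₀) • Gx z₀)
      = (fun z : ℂ => (G ⟨z.re, z.im⟩ - G ⟨z₀.re, z.im⟩ - (z.re - z₀.re) • Gx z₀)
          + (G ⟨z₀.re, z.im⟩ - G z₀ - (z.im - z₀.im) • Gy z₀)) := by
    funext z
    have hsplit : z - z₀ = (((z.re - z₀.re : ℝ) : ℂ)) + ((z.im - z₀.im : ℝ) : ℂ) * Complex.I := by
      apply Complex.ext <;> simp
    have h1 : (z - z₀) • Gx z₀ = (z.re - z₀.re) • Gx z₀ + (z.im - z₀.im) • Gy z₀ := by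
      rw [hCR z₀ hz₀, hsplit, add_smul, mul_smul]
      simp only [← Complex.coe_algebraMap, algebraMap_smul]
    have heta : (⟨z.re, z.im⟩ : ℂ) = z := rfl
    rw [heta, h1]
    abel
  rw [key]
  have term2 : (fun z : ℂ => G ⟨z₀.re, z.im⟩ - G z₀ - (z.im - z₀.im) • Gy z₀)
      =o[𝓝 z₀] fun z => z - z₀ := by
    have h := (hasDerivAt_iff_isLittleO.1 (hGy z₀ hz₀))
    have hcomp := h.comp_tendsto (Complex.continuous_im.tendsto z₀)
    have hO : (fun z : ℂ => z.im - z₀.im) =O[𝓝 z₀] fun z => z - z₀ := by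
      apply IsBigO.of_bound 1
      filter_upwards with z
      rw [one_mul, Real.norm_eq_abs, ← Complex.sub_im]
      exact Complex.abs_im_le_norm _
    exact (hcomp.trans_isBigO hO).congr_left (fun z => rfl)
  have term1 : (fun z : ℂ => G ⟨z.re, z.im⟩ - G ⟨z₀.re, z.im⟩ - (z.re - z₀.re) • Gx z₀)
      =o[𝓝 z₀] fun z => z - z₀ := by
    rw [isLittleO_iff]
    intro ε hε
    obtain ⟨δ₁, hδ₁pos, hδ₁⟩ := Metric.continuousAt_iff.1 (hGxc.continuousAt (hV.mem_nhds hz₀)) ε hε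
    obtain ⟨δ₂, hδ₂pos, hδ₂⟩ := Metric.isOpen_iff.1 hV z₀ hz₀
    set δ := min δ₁ δ₂ with hδ
    have hδpos : 0 < δ / 2 := by positivity
    filter_upwards [Metric.ball_mem_nhds z₀ hδpos] with z hz
    have hzd : dist z z₀ < δ / 2 := hz
    -- every point ⟨t, z.im⟩ with t ∈ uIcc z₀.re z.re is δ-close to z₀
    have hmem : ∀ t ∈ Set.uIcc z₀.re z.re, dist (⟨t, z.im⟩ : ℂ) z₀ < δ := by
      intro t ht
      have h1 : |t - z₀.re| ≤ |z.re - z₀.re| := abs_sub_le_of_mem_uIcc' ht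
      have h2 : |z.re - z₀.re| ≤ dist z z₀ := by
        rw [Complex.dist_eq, ← Complex.sub_re]
        exact Complex.abs_re_le_norm _
      have h3 : |z.im - z₀.im| ≤ dist z z₀ := by
        rw [Complex.dist_eq, ← Complex.sub_im]
        exact Complex.abs_im_le_norm _
      have h4 : dist (⟨t, z.im⟩ : ℂ) z₀ ≤ |t - z₀.re| + |z.im - z₀.im| := by
        rw [Complex.dist_eq]
        exact Complex.norm_le_abs_re_add_abs_im _
      calc dist (⟨t, z.im⟩ : ℂ) z₀ ≤ |t - z₀.re| + |z.im - z₀.im| := h4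
        _ ≤ dist z z₀ + dist z z₀ := add_le_add (h1.trans h2) h3
        _ < δ / 2 + δ / 2 := by linarith
        _ = δ := by ring
    set φ : ℝ → E := fun t => G ⟨t, z.im⟩ - t • Gx z₀ with hφdef
    have hmvt : ‖φ z.re - φ z₀.re‖ ≤ ε * ‖z.re - z₀.re‖ := by
      apply Convex.norm_image_sub_le_of_norm_hasDerivWithin_le
        (f' := fun t => Gx ⟨t, z.im⟩ - Gx z₀) ?_ ?_ (convex_uIcc z₀.re z.re)
        Set.left_mem_uIcc Set.right_mem_uIcc
      · intro t ht
        have hw : (⟨t, z.im⟩ : ℂ) ∈ V := hδ₂ (lt_of_lt_of_le (hmem t ht) (min_le_right _ _))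
        have := (hGx _ hw).sub ((hasDerivAt_id t).smul_const (Gx z₀))
        simp only [one_smul] at this
        exact this.hasDerivWithinAt
      · intro t ht
        have := hδ₁ (lt_of_lt_of_le (hmem t ht) (min_le_left _ _))
        rw [dist_eq_norm] at this
        exact this.le
    have heq : φ z.re - φ z₀.re
        = G ⟨z.re, z.im⟩ - G ⟨z₀.re, z.im⟩ - (z.re - z₀.re) • Gx z₀ := by
      simp only [hφdef, sub_smul]
      abel
    rw [heq] at hmvt
    refine hmvt.trans ?_
    have : ‖z.re - z₀.re‖ ≤ ‖z - z₀‖ := by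
      rw [Real.norm_eq_abs, ← Complex.sub_re]
      exact Complex.abs_re_le_norm _
    exact mul_le_mul_of_nonneg_left this hε.le
  exact term1.add term2

theorem cr_eqOn_zero {E : Type*} [NormedAddCommGroup E] [NormedSpace ℝ E] [NormedSpace ℂ E]
    [IsScalarTower ℝ ℂ E] [CompleteSpace E]
    {V : Set ℂ} (hV : IsOpen V) (hVc : IsPreconnected V) {G Gx Gy : ℂ → E}
    (hGx : ∀ z ∈ V, HasDerivAt (fun t : ℝ => G ⟨t, z.im⟩) (Gx z) z.re)
    (hGy : ∀ z ∈ V, HasDerivAt (fun t : ℝ => G ⟨z.re, t⟩) (Gy z) z.im)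
    (hGxc : ContinuousOn Gx V)
    (hCR : ∀ z ∈ V, Gy z = Complex.I • Gx z)
    {z₀ : ℂ} (hz₀ : z₀ ∈ V) (hfreq : ∃ᶠ z in 𝓝[≠] z₀, G z = 0) : Set.EqOn G 0 V := by
  have hd : DifferentiableOn ℂ G V := fun z hz =>
    (cr_hasDerivAt hV hGx hGy hGxc hCR hz).differentiableAt.differentiableWithinAt
  exact (hd.analyticOnNhd hV).eqOn_zero_of_preconnected_of_frequently_eq_zero hVc hz₀ hfreq

end CR

namespace HS
open Quaternion
variable (I : Sp)

lemma hasDerivAt_of {g : ℝ → ℍ[ℝ]} {d : ℍ[ℝ]} {x : ℝ} (h : HasDerivAt g d x) :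
    HasDerivAt (fun t => of I (g t)) (of I d) x := h

lemma continuousOn_of {g : ℂ → ℍ[ℝ]} {s : Set ℂ} (h : ContinuousOn g s) :
    ContinuousOn (fun z => of I (g z)) s := h

lemma of_eq_zero {q : ℍ[ℝ]} (h : q = 0) : of I q = 0 := h

end HS

set_option maxHeartbeats 1000000 in
open Quaternion in
/-- Representation Formula. -/
theorem representation_formula
    (Ω : Set ℍ[ℝ]) (hΩ : IsSDomain Ω) (hax : AxSymm Ω)
    (f : ℍ[ℝ] → ℍ[ℝ]) (hf : SliceRegularOn f Ω)
    (J : ℍ[ℝ]) (hJ : J ∈ SpH)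
    (x y : ℝ) (I : ℍ[ℝ]) (hI : I ∈ SpH) (hq : (x : ℍ[ℝ]) + y • I ∈ Ω) :
    f ((x : ℍ[ℝ]) + y • I) =
      (1 / 2 : ℝ) • (f ((x : ℍ[ℝ]) + y • J) + f ((x : ℍ[ℝ]) - y • J)) +
        I * ((1 / 2 : ℝ) • (J * (f ((x : ℍ[ℝ]) - y • J) - f ((x : ℍ[ℝ]) + y • J)))) := by
  obtain ⟨hΩopen, -, ⟨x₀, hx₀⟩, hslice⟩ := hΩ
  obtain ⟨u, v, hu, hv, huc, hvc, hcrI⟩ := hf I hI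
  obtain ⟨a, b, ha, hb, hac, hbc, hcrJ⟩ := hf J hJ
  set Ib : Sp := ⟨I, hI⟩ with hIb
  have hI2 : I * I = -1 := SpH.mul_self hI
  have hJ2 : J * J = -1 := SpH.mul_self hJ
  have hIq : ∀ q : ℍ[ℝ], I * (I * q) = -q := fun q => by rw [← mul_assoc, hI2, neg_one_mul]
  have hJq : ∀ q : ℍ[ℝ], J * (J * q) = -q := fun q => by rw [← mul_assoc, hJ2, neg_one_mul]
  -- the slice domain in ℂ
  set V : Set ℂ := {z : ℂ | (z.re : ℍ[ℝ]) + z.im • I ∈ Ω} with hV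
  have hπ : Continuous fun z : ℂ => (z.re : ℍ[ℝ]) + z.im • I :=
    (Quaternion.continuous_coe.comp Complex.continuous_re).add
      (Complex.continuous_im.smul continuous_const)
  have hVopen : IsOpen V := hΩopen.preimage hπ
  have hmemJ : ∀ z ∈ V, (z.re : ℍ[ℝ]) + z.im • J ∈ Ω := fun z hz => hax _ _ I hI hz J hJ
  have hmemJ' : ∀ z ∈ V, (z.re : ℍ[ℝ]) + (-z.im) • J ∈ Ω := by
    intro z hz
    have h := hax _ _ I hI hz (-J) (SpH.neg hJ)
    rwa [smul_neg, ← neg_smul] at h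
  -- the functions
  set F : ℂ → ℍ[ℝ] := fun z => f ((z.re : ℍ[ℝ]) + z.im • I) with hF
  set Ψ : ℂ → ℍ[ℝ] := fun z =>
    (1 / 2 : ℝ) • (f ((z.re : ℍ[ℝ]) + z.im • J) + f ((z.re : ℍ[ℝ]) + (-z.im) • J)) +
      I * ((1 / 2 : ℝ) •
        (J * (f ((z.re : ℍ[ℝ]) + (-z.im) • J) - f ((z.re : ℍ[ℝ]) + z.im • J)))) with hΨ
  set Gq : ℂ → ℍ[ℝ] := fun z => F z - Ψ z with hGq
  set Gxq : ℂ → ℍ[ℝ] := fun z =>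
    u z.re z.im - ((1 / 2 : ℝ) • (a z.re z.im + a z.re (-z.im)) +
      I * ((1 / 2 : ℝ) • (J * (a z.re (-z.im) - a z.re z.im)))) with hGxq
  set Gyq : ℂ → ℍ[ℝ] := fun z =>
    v z.re z.im - ((1 / 2 : ℝ) • (b z.re z.im + -(b z.re (-z.im))) +
      I * ((1 / 2 : ℝ) • (J * (-(b z.re (-z.im)) - b z.re z.im)))) with hGyq
  -- partial derivative in the x-direction
  have hGx : ∀ z ∈ V, HasDerivAt (fun t : ℝ => HS.of Ib (Gq ⟨t, z.im⟩)) (HS.of Ib (Gxq z)) z.re := by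
    intro z hz
    apply HS.hasDerivAt_of
    have hd1 := hu z.re z.im hz
    have hd2 := ha z.re z.im (hmemJ z hz)
    have hd3 := ha z.re (-z.im) (hmemJ' z hz)
    exact hd1.sub (((hd2.add hd3).const_smul (1/2 : ℝ)).add
      ((((hd3.sub hd2).const_mul J).const_smul (1/2 : ℝ)).const_mul I))
  -- partial derivative in the y-direction
  have hGy : ∀ z ∈ V, HasDerivAt (fun t : ℝ => HS.of Ib (Gq ⟨z.re, t⟩)) (HS.of Ib (Gyq z)) z.im := by
    intro z hz
    apply HS.hasDerivAt_of
    have hd1 := hv z.re z.im hz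
    have hd2 := hb z.re z.im (hmemJ z hz)
    have hd3 : HasDerivAt (fun t : ℝ => f ((z.re : ℍ[ℝ]) + (-t) • J))
        (-(b z.re (-z.im))) z.im := by
      have h0 := (hb z.re (-z.im) (hmemJ' z hz)).scomp z.im (hasDerivAt_neg z.im)
      simpa [Function.comp_def] using h0
    exact hd1.sub (((hd2.add hd3).const_smul (1/2 : ℝ)).add
      ((((hd3.sub hd2).const_mul J).const_smul (1/2 : ℝ)).const_mul I))
  -- continuity of the x-partial
  have hGxc : ContinuousOn (fun z => HS.of Ib (Gxq z)) V := by
    apply HS.continuousOn_of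
    have hm1 : Continuous fun z : ℂ => (z.re, z.im) := Complex.continuous_re.prodMk Complex.continuous_im
    have hm2 : Continuous fun z : ℂ => (z.re, -z.im) := Complex.continuous_re.prodMk Complex.continuous_im.neg
    have c1 : ContinuousOn (fun z : ℂ => u z.re z.im) V :=
      huc.comp hm1.continuousOn (fun z hz => hz)
    have c2 : ContinuousOn (fun z : ℂ => a z.re z.im) V :=
      hac.comp hm1.continuousOn (fun z hz => hmemJ z hz)
    have c3 : ContinuousOn (fun z : ℂ => a z.re (-z.im)) V :=
      hac.comp hm2.continuousOn (fun z hz => hmemJ' z hz)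
    exact c1.sub (((c2.add c3).const_smul (1/2 : ℝ)).add
      (continuousOn_const.mul ((continuousOn_const.mul (c3.sub c2)).const_smul (1/2 : ℝ))))
  -- Cauchy-Riemann for G
  have hcr0 : ∀ z ∈ V, Gxq z + I * Gyq z = 0 := by
    intro z hz
    have hA1 : a z.re z.im = -(J * b z.re z.im) :=
      eq_neg_of_add_eq_zero_left (hcrJ z.re z.im (hmemJ z hz))
    have hA2 : a z.re (-z.im) = -(J * b z.re (-z.im)) :=
      eq_neg_of_add_eq_zero_left (hcrJ z.re (-z.im) (hmemJ' z hz))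
    have hIv : I * v z.re z.im = -(u z.re z.im) :=
      eq_neg_of_add_eq_zero_right (hcrI z.re z.im hz)
    simp only [hGxq, hGyq, hA1, hA2]
    simp only [mul_add, mul_sub, mul_neg, mul_smul_comm, smul_add, smul_sub, smul_neg,
      hJq, hIq, hIv, neg_neg, neg_sub]
    abel
  have hCR : ∀ z ∈ V, HS.of Ib (Gyq z) = Complex.I • HS.of Ib (Gxq z) := by
    intro z hz
    rw [HS.I_smul, HS.out_of]
    have h2 : I * Gxq z + I * (I * Gyq z) = 0 := by
      rw [← mul_add, hcr0 z hz, mul_zero]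
    rw [hIq] at h2
    show HS.of Ib (Gyq z) = HS.of Ib (I * Gxq z)
    exact congrArg (HS.of Ib) (add_neg_eq_zero.mp h2).symm
  -- connectedness of V
  set ρ : ℍ[ℝ] → ℂ := fun q => (q.re : ℂ) + ((-((q * I).re) : ℝ) : ℂ) * Complex.I with hρ
  have hρcont : Continuous ρ := by
    apply Continuous.add
    · exact Complex.continuous_ofReal.comp Quaternion.continuous_re
    · exact (Complex.continuous_ofReal.comp
        ((Quaternion.continuous_re.comp (continuous_id.mul continuous_const)).neg)).mul
        continuous_const
  have hρval : ∀ (x' y' : ℝ), ρ ((x' : ℍ[ℝ]) + y' • I) = ⟨x', y'⟩ := by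
    intro x' y'
    have h1 : ((x' : ℍ[ℝ]) + y' • I).re = x' := by
      simp [hI.1]
    have h2 := SpH.re_mul hI x' y'
    simp only [hρ, h1, h2]
    apply Complex.ext <;> simp
  have himg : ρ '' (Ω ∩ sliceL I) = V := by
    apply Set.Subset.antisymm
    · rintro - ⟨q, ⟨hqΩ, ⟨x', y', rfl⟩⟩, rfl⟩
      rw [hρval]
      show (((⟨x', y'⟩ : ℂ)).re : ℍ[ℝ]) + ((⟨x', y'⟩ : ℂ)).im • I ∈ Ω
      exact hqΩ
    · intro z hz
      exact ⟨(z.re : ℍ[ℝ]) + z.im • I, ⟨hz, ⟨z.re, z.im, rfl⟩⟩, by rw [hρval]⟩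
  have hVconn : IsPreconnected V := by
    rw [← himg]
    exact ((hslice I hI).image ρ hρcont.continuousOn).isPreconnected
  -- G vanishes on the reals
  have hhalf : ∀ q : ℍ[ℝ], (1/2 : ℝ) • (q + q) = q := by
    intro q
    rw [← two_smul ℝ q, smul_smul]
    norm_num
  have hGreal : ∀ t : ℝ, Gq ((t : ℂ)) = 0 := by
    intro t
    simp only [hGq, hF, hΨ, Complex.ofReal_re, Complex.ofReal_im, neg_zero, zero_smul,
      add_zero, sub_self, mul_zero, smul_zero, hhalf]
  -- the base point
  have hx₀V : ((x₀ : ℝ) : ℂ) ∈ V := by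
    show (((x₀ : ℝ) : ℂ).re : ℍ[ℝ]) + ((x₀ : ℝ) : ℂ).im • I ∈ Ω
    simpa using hx₀
  have hfreq : ∃ᶠ z in nhdsWithin ((x₀ : ℝ) : ℂ) {((x₀ : ℝ) : ℂ)}ᶜ,
      (fun z => HS.of Ib (Gq z)) z = 0 := by
    rw [Filter.frequently_iff]
    intro U hU
    obtain ⟨ε, hεpos, hεsub⟩ := Metric.mem_nhdsWithin_iff.1 hU
    refine ⟨((x₀ + ε/2 : ℝ) : ℂ), hεsub ⟨?_, ?_⟩, HS.of_eq_zero Ib (hGreal _)⟩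
    · rw [Metric.mem_ball, Complex.dist_eq, ← Complex.ofReal_sub, Complex.norm_real, Real.norm_eq_abs]
      rw [show x₀ + ε/2 - x₀ = ε/2 by ring, abs_of_pos (by linarith)]
      linarith
    · simp only [Set.mem_compl_iff, Set.mem_singleton_iff]
      intro hcon
      have := Complex.ofReal_inj.1 hcon
      linarith
  -- conclusion
  have heq := cr_eqOn_zero (G := fun z => HS.of Ib (Gq z)) (Gx := fun z => HS.of Ib (Gxq z))
    (Gy := fun z => HS.of Ib (Gyq z)) hVopen hVconn hGx hGy hGxc hCR hx₀V hfreq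
    (show (⟨x, y⟩ : ℂ) ∈ V from hq)
  have hzero : Gq (⟨x, y⟩ : ℂ) = 0 := heq
  have hmain : F (⟨x, y⟩ : ℂ) = Ψ (⟨x, y⟩ : ℂ) := sub_eq_zero.mp hzero
  rw [sub_eq_add_neg, ← neg_smul]
  exact hmain
end
end

section
/- Let Ω ⊆ ℍ be a domain such that Ω ∩ ℝ ≠ ∅. Then the symmetric completion Ω̃ of Ω is an axially symmetric s-domain. -/
open Quaternion

noncomputable section

section Helpers

variable {Ω : Set ℍ[ℝ]}

/-- The projection onto the `J`-slice. -/
def psiH (J : ℍ[ℝ]) (q : ℍ[ℝ]) : ℍ[ℝ] := ((q.re : ℝ) : ℍ[ℝ]) + ‖q.im‖ • J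

lemma psiH_cont (J : ℍ[ℝ]) : Continuous (psiH J) := by
  unfold psiH
  exact (Quaternion.continuous_coe.comp Quaternion.continuous_re).add
    (Quaternion.continuous_im.norm.smul continuous_const)

lemma neg_mem_SpH {I : ℍ[ℝ]} (hI : I ∈ SpH) : -I ∈ SpH := by
  refine ⟨?_, ?_⟩ <;> simp [hI.1, hI.2]

lemma unitI_mem_SpH : ((Complex.I : ℂ) : ℍ[ℝ]) ∈ SpH := by
  constructor
  · simp
  · have h : normSq ((Complex.I : ℂ) : ℍ[ℝ]) = 1 := by
      simp [Quaternion.normSq_def']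
    have h2 := Quaternion.normSq_eq_norm_mul_self (a := ((Complex.I : ℂ) : ℍ[ℝ]))
    nlinarith [norm_nonneg ((Complex.I : ℂ) : ℍ[ℝ])]

lemma re_mk {I : ℍ[ℝ]} (hI : I ∈ SpH) (x y : ℝ) : ((x : ℍ[ℝ]) + y • I).re = x := by
  simp [hI.1]

lemma im_mk {I : ℍ[ℝ]} (hI : I ∈ SpH) (x y : ℝ) : ((x : ℍ[ℝ]) + y • I).im = y • I := by
  have hII : I.im = I := by
    conv_rhs => rw [← Quaternion.re_add_im I]
    simp [hI.1]
  simp [Quaternion.im_coe, hII]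

lemma norm_im_mk {I : ℍ[ℝ]} (hI : I ∈ SpH) (x y : ℝ) :
    ‖((x : ℍ[ℝ]) + y • I).im‖ = |y| := by
  rw [im_mk hI, norm_smul, hI.2, Real.norm_eq_abs, mul_one]

lemma exists_rep (q : ℍ[ℝ]) : ∃ J ∈ SpH, ((q.re : ℝ) : ℍ[ℝ]) + ‖q.im‖ • J = q := by
  by_cases h : q.im = 0
  · have h0 : ((q.re : ℝ) : ℍ[ℝ]) = q := by
      conv_rhs => rw [← q.re_add_im]
      rw [h, add_zero]
    exact ⟨_, unitI_mem_SpH, by simp [h, h0]⟩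
  · refine ⟨‖q.im‖⁻¹ • q.im, ⟨?_, ?_⟩, ?_⟩
    · simp
    · rw [norm_smul, norm_inv, norm_norm]
      exact inv_mul_cancel₀ (norm_ne_zero_iff.2 h)
    · rw [smul_smul, mul_inv_cancel₀ (norm_ne_zero_iff.2 h), one_smul,
        Quaternion.re_add_im]

lemma psiH_mem_sliceL (I q : ℍ[ℝ]) : psiH I q ∈ sliceL I := ⟨q.re, ‖q.im‖, rfl⟩

lemma psiH_neg_mem_sliceL (I q : ℍ[ℝ]) : psiH (-I) q ∈ sliceL I :=
  ⟨q.re, -‖q.im‖, by rw [psiH, smul_neg, neg_smul]⟩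

lemma psiH_mem_symmComp {J : ℍ[ℝ]} (hJ : J ∈ SpH) {q : ℍ[ℝ]} (hq : q ∈ Ω) :
    psiH J q ∈ symmComp Ω := by
  obtain ⟨J', hJ', hrep⟩ := exists_rep q
  exact ⟨q.re, ‖q.im‖, J, hJ, rfl, J', hJ', by rw [hrep]; exact hq⟩

lemma psiH_coe (J : ℍ[ℝ]) (x : ℝ) : psiH J ((x : ℝ) : ℍ[ℝ]) = x := by
  simp [psiH]

lemma symmComp_eq_iUnion_image :
    symmComp Ω = ⋃ J ∈ SpH, psiH J '' Ω := by
  ext q; constructor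
  · rintro ⟨x, y, I, hI, rfl, J, hJ, hmem⟩
    rcases le_or_gt 0 y with hy | hy
    · refine Set.mem_biUnion hI ⟨_, hmem, ?_⟩
      rw [psiH, re_mk hJ, norm_im_mk hJ, abs_of_nonneg hy]
    · refine Set.mem_biUnion (neg_mem_SpH hI) ⟨_, hmem, ?_⟩
      rw [psiH, re_mk hJ, norm_im_mk hJ, abs_of_neg hy, smul_neg, neg_smul, neg_neg]
  · simp only [Set.mem_iUnion]
    rintro ⟨J, hJ, q', hq', rfl⟩
    exact psiH_mem_symmComp hJ hq'

lemma symmComp_eq_iUnion_preimage :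
    symmComp Ω = ⋃ J ∈ SpH, psiH J ⁻¹' Ω := by
  ext q; constructor
  · rintro ⟨x, y, I, hI, rfl, J, hJ, hmem⟩
    rcases le_or_gt 0 y with hy | hy
    · refine Set.mem_biUnion hJ ?_
      show psiH J _ ∈ Ω
      rw [psiH, re_mk hI, norm_im_mk hI, abs_of_nonneg hy]
      exact hmem
    · refine Set.mem_biUnion (neg_mem_SpH hJ) ?_
      show psiH (-J) _ ∈ Ω
      rw [psiH, re_mk hI, norm_im_mk hI, abs_of_neg hy, smul_neg, neg_smul, neg_neg]
      exact hmem
  · simp only [Set.mem_iUnion]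
    rintro ⟨J, hJ, hq⟩
    obtain ⟨I, hI, hrep⟩ := exists_rep q
    exact ⟨q.re, ‖q.im‖, I, hI, hrep.symm, J, hJ, hq⟩

lemma symmComp_inter_slice {I : ℍ[ℝ]} (hI : I ∈ SpH) :
    symmComp Ω ∩ sliceL I = psiH I '' Ω ∪ psiH (-I) '' Ω := by
  ext q; constructor
  · rintro ⟨⟨x, y, I₀, hI₀, heq, J, hJ, hmem⟩, a, b, hab⟩
    have hre : x = a := by
      have h1 : q.re = x := by rw [heq]; exact re_mk hI₀ x y
      have h2 : q.re = a := by rw [hab]; exact re_mk hI a b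
      rw [← h1, h2]
    have him : |y| = |b| := by
      have h1 : ‖q.im‖ = |y| := by rw [heq]; exact norm_im_mk hI₀ x y
      have h2 : ‖q.im‖ = |b| := by rw [hab]; exact norm_im_mk hI a b
      rw [← h1, h2]
    rcases le_or_gt 0 b with hb | hb
    · refine Or.inl ⟨_, hmem, ?_⟩
      rw [psiH, re_mk hJ, norm_im_mk hJ, him, abs_of_nonneg hb, hre, hab]
    · refine Or.inr ⟨_, hmem, ?_⟩
      rw [psiH, re_mk hJ, norm_im_mk hJ, him, abs_of_neg hb, smul_neg, neg_smul,
        neg_neg, hre, hab]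
  · rintro (⟨p, hp, rfl⟩ | ⟨p, hp, rfl⟩)
    · exact ⟨psiH_mem_symmComp hI hp, psiH_mem_sliceL I p⟩
    · exact ⟨psiH_mem_symmComp (neg_mem_SpH hI) hp, psiH_neg_mem_sliceL I p⟩

end Helpers

/-- The symmetric completion of a domain meeting the real axis is an axially symmetric
s-domain. -/
theorem symmComp_isSDomain
    (Ω : Set ℍ[ℝ]) (hopen : IsOpen Ω) (hconn : IsConnected Ω)
    (hre : ∃ x : ℝ, (x : ℍ[ℝ]) ∈ Ω) :
    IsSDomain (symmComp Ω) ∧ AxSymm (symmComp Ω) := by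
  obtain ⟨x₀, hx₀⟩ := hre
  have hx₀s : ∀ J : ℍ[ℝ], ((x₀ : ℝ) : ℍ[ℝ]) ∈ psiH J '' Ω :=
    fun J => ⟨_, hx₀, psiH_coe J x₀⟩
  have himg : ∀ J : ℍ[ℝ], IsConnected (psiH J '' Ω) :=
    fun J => hconn.image _ (psiH_cont J).continuousOn
  refine ⟨⟨?_, ?_, ?_, ?_⟩, ?_⟩
  · -- open
    rw [symmComp_eq_iUnion_preimage]
    exact isOpen_biUnion fun J _ => hopen.preimage (psiH_cont J)
  · -- connected
    rw [symmComp_eq_iUnion_image]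
    refine ⟨⟨_, Set.mem_biUnion unitI_mem_SpH (hx₀s _)⟩, ?_⟩
    rw [← Set.sUnion_image]
    refine isPreconnected_sUnion ((x₀ : ℝ) : ℍ[ℝ]) _ ?_ ?_
    · rintro s ⟨J, _, rfl⟩; exact hx₀s J
    · rintro s ⟨J, _, rfl⟩; exact (himg J).isPreconnected
  · -- contains a real point
    refine ⟨x₀, ?_⟩
    have := psiH_mem_symmComp (Ω := Ω) unitI_mem_SpH hx₀
    rwa [psiH_coe] at this
  · -- slices connected
    intro I hI
    rw [symmComp_inter_slice hI]
    exact (himg I).union ⟨_, hx₀s I, hx₀s (-I)⟩ (himg (-I))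
  · -- axially symmetric
    intro x y I hI hmem J hJ
    obtain ⟨x', y', I', hI', heq, J', hJ', hΩ⟩ := hmem
    have hx : x = x' := by rw [← re_mk hI x y, heq, re_mk hI']
    have habs : |y| = |y'| := by rw [← norm_im_mk hI x y, heq, norm_im_mk hI']
    rcases abs_eq_abs.1 habs with h | h
    · exact ⟨x, y, J, hJ, rfl, J', hJ', by rw [hx, h]; exact hΩ⟩
    · refine ⟨x, y, J, hJ, rfl, -J', neg_mem_SpH hJ', ?_⟩
      rw [hx, smul_neg, h, neg_smul, neg_neg]
      exact hΩ
end
end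

section
/- Let f : Ω → ℍ be slice regular on an s-domain Ω, and let Z_f = {q ∈ Ω : f(q) = 0} be its zero set. If there exists I ∈ 𝕊 such that L_I ∩ Z_f has an accumulation point in L_I ∩ Ω, then f ≡ 0 on Ω. -/
open Quaternion

noncomputable section

section Aux

open Filter Asymptotics Set

variable {F : Type*} [NormedAddCommGroup F] [NormedSpace ℝ F]

theorem hasFDerivAt_of_partials (G : ℝ × ℝ → F) (gx gy : ℝ → ℝ → F) (U : Set (ℝ × ℝ))
    (hU : IsOpen U)
    (hx : ∀ p ∈ U, HasDerivAt (fun t => G (t, p.2)) (gx p.1 p.2) p.1)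
    (hy : ∀ p ∈ U, HasDerivAt (fun t => G (p.1, t)) (gy p.1 p.2) p.2)
    (hcx : ContinuousOn (fun p : ℝ × ℝ => gx p.1 p.2) U)
    {a b : ℝ} (hab : (a, b) ∈ U) :
    HasFDerivAt G ((ContinuousLinearMap.fst ℝ ℝ ℝ).smulRight (gx a b)
      + (ContinuousLinearMap.snd ℝ ℝ ℝ).smulRight (gy a b)) (a, b) := by
  set c := gx a b with hc
  set d := gy a b with hd
  rw [hasFDerivAt_iff_isLittleO_nhds_zero]
  have hB : (fun p : ℝ × ℝ => G (a, b + p.2) - G (a, b) - p.2 • d) =o[nhds 0]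
      (fun p : ℝ × ℝ => p) := by
    have h1 : (fun k : ℝ => G (a, b + k) - G (a, b) - k • d) =o[nhds 0] (fun k : ℝ => k) :=
      hasDerivAt_iff_isLittleO_nhds_zero.1 (hy (a, b) hab)
    have h2 : Tendsto (fun p : ℝ × ℝ => p.2) (nhds 0) (nhds 0) := by
      simpa using (continuous_snd.tendsto (0 : ℝ × ℝ))
    exact (h1.comp_tendsto h2).trans_isBigO
      (isBigO_of_le _ (fun p => by simpa using norm_snd_le p))
  have hA : (fun p : ℝ × ℝ => G (a + p.1, b + p.2) - G (a, b + p.2) - p.1 • c) =o[nhds 0]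
      (fun p : ℝ × ℝ => p) := by
    rw [isLittleO_iff]
    intro ε hε
    have hcont : ContinuousAt (fun p : ℝ × ℝ => gx p.1 p.2) (a, b) :=
      hcx.continuousAt (hU.mem_nhds hab)
    have hev : ∀ᶠ p : ℝ × ℝ in nhds (a, b), p ∈ U ∧ ‖gx p.1 p.2 - c‖ ≤ ε := by
      filter_upwards [hU.mem_nhds hab,
        hcont (Metric.closedBall_mem_nhds c hε)] with p h1 h2
      exact ⟨h1, by simpa [dist_eq_norm] using h2⟩
    rw [Metric.eventually_nhds_iff] at hev
    obtain ⟨δ, hδ, hball⟩ := hev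
    filter_upwards [Metric.ball_mem_nhds (0 : ℝ × ℝ) hδ] with p hp
    have hpn : ‖p‖ < δ := by simpa [Metric.mem_ball, dist_eq_norm] using hp
    have hp1 : ‖p.1‖ < δ := lt_of_le_of_lt (norm_fst_le p) hpn
    have hp2 : ‖p.2‖ < δ := lt_of_le_of_lt (norm_snd_le p) hpn
    have key : ‖(G (a + p.1, b + p.2) - p.1 • c) - (G (a + 0, b + p.2) - (0:ℝ) • c)‖
        ≤ ε * ‖p.1 - 0‖ := by
      refine Convex.norm_image_sub_le_of_norm_hasDerivWithin_le
        (f := fun t => G (a + t, b + p.2) - t • c)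
        (f' := fun t => gx (a + t) (b + p.2) - c) ?_ ?_ (convex_ball (0:ℝ) δ) ?_ ?_
      · intro t ht
        have htδ : ‖t‖ < δ := by simpa [Real.norm_eq_abs, Metric.mem_ball, dist_eq_norm] using ht
        have hd2 : dist ((a + t, b + p.2) : ℝ × ℝ) (a, b) < δ := by
          simpa [Prod.dist_eq, dist_eq_norm, Prod.norm_def, max_lt_iff] using ⟨htδ, hp2⟩
        have hmem : (a + t, b + p.2) ∈ U := (hball hd2).1
        have h1 : HasDerivAt (fun u => G (u, b + p.2)) (gx (a + t) (b + p.2)) (a + t) :=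
          hx _ hmem
        have h2 : HasDerivAt (fun u => G (a + u, b + p.2)) (gx (a + t) (b + p.2)) t :=
          h1.comp_const_add a t
        exact ((h2.sub ((hasDerivAt_id t).smul_const c)).congr_deriv (by simp)).hasDerivWithinAt
      · intro t ht
        have htδ : ‖t‖ < δ := by simpa [Real.norm_eq_abs, Metric.mem_ball, dist_eq_norm] using ht
        show ‖gx (a + t) (b + p.2) - c‖ ≤ ε
        have hd2 : dist ((a + t, b + p.2) : ℝ × ℝ) (a, b) < δ := by
          simpa [Prod.dist_eq, dist_eq_norm, Prod.norm_def, max_lt_iff] using ⟨htδ, hp2⟩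
        exact (hball hd2).2
      · simpa using hδ
      · simpa [Metric.mem_ball, dist_eq_norm] using hp1
    have heq : G (a + p.1, b + p.2) - p.1 • c - G (a, b + p.2)
        = G (a + p.1, b + p.2) - G (a, b + p.2) - p.1 • c := by abel
    have : ‖G (a + p.1, b + p.2) - G (a, b + p.2) - p.1 • c‖ ≤ ε * ‖p.1‖ := by
      rw [← heq]; simpa using key
    exact this.trans (by gcongr; exact norm_fst_le p)
  have := hA.add hB
  refine this.congr' ?_ (Filter.EventuallyEq.refl _ _)
  filter_upwards with p
  have : ((a, b) : ℝ × ℝ) + p = (a + p.1, b + p.2) := rfl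
  rw [this]
  simp only [ContinuousLinearMap.add_apply, ContinuousLinearMap.smulRight_apply,
    ContinuousLinearMap.coe_fst', ContinuousLinearMap.coe_snd']
  abel

end Aux

section Slice

/-- Identity principle on a single slice. -/
theorem slice_zero (Ω : Set ℍ[ℝ]) (hΩo : IsOpen Ω) (f : ℍ[ℝ] → ℍ[ℝ])
    (I : ℍ[ℝ]) (hI : I ∈ SpH) (hsh : SliceHolomorphicOn I f Ω)
    (hconn : IsConnected (Ω ∩ sliceL I))
    (p : ℍ[ℝ]) (hp : p ∈ sliceL I ∩ Ω)
    (hacc : AccPt p (Filter.principal (sliceL I ∩ {q ∈ Ω | f q = 0}))) :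
    ∀ q ∈ Ω ∩ sliceL I, f q = 0 := by
  obtain ⟨fx, fy, hdx, hdy, hcx, _, hcr⟩ := hsh
  have hre : I.re = 0 := hI.1
  have hnormSqI : Quaternion.normSq I = 1 := by
    rw [Quaternion.normSq_eq_norm_mul_self, hI.2, one_mul]
  have hII : I * I = -1 := by
    have h1 : star I = -I := Quaternion.star_eq_neg.2 hre
    have h2 := Quaternion.self_mul_star I
    rw [h1, mul_neg, hnormSqI] at h2
    rw [show ((1 : ℝ) : ℍ[ℝ]) = 1 from Quaternion.coe_one] at h2
    exact neg_eq_iff_eq_neg.1 h2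
  set A := Complex.liftAux I hII with hAdef
  have hAz : ∀ z : ℂ, A z = ((z.re : ℝ) : ℍ[ℝ]) + z.im • I := fun z => by
    rw [hAdef, Complex.liftAux_apply]
    rfl
  have hAnorm : ∀ z : ℂ, ‖A z‖ = ‖z‖ := by
    intro z
    have hsq : I.imI ^ 2 + I.imJ ^ 2 + I.imK ^ 2 = 1 := by
      have h := Quaternion.normSq_def' I
      rw [hnormSqI] at h
      rw [hre] at h
      nlinarith [h]
    have h2 : Quaternion.normSq (A z) = z.re ^ 2 + z.im ^ 2 := by
      rw [hAz, Quaternion.normSq_def']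
      simp [hre]
      ring_nf
      nlinarith [hsq]
    have h1 : ‖A z‖ * ‖A z‖ = ‖z‖ * ‖z‖ := by
      rw [← Quaternion.normSq_eq_norm_mul_self, h2]
      have h3 : ‖z‖ ^ 2 = z.re ^ 2 + z.im ^ 2 := by
        rw [Complex.sq_norm, Complex.normSq_apply]; ring
      nlinarith [h3]
    exact (mul_self_inj (norm_nonneg _) (norm_nonneg _)).1 h1
  have hAinj : Function.Injective A := by
    intro z w hzw
    have h0 : ‖z - w‖ = 0 := by
      rw [← hAnorm, map_sub, hzw, sub_self, norm_zero]
    exact sub_eq_zero.1 (norm_eq_zero.1 h0)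
  obtain ⟨g, hg⟩ := LinearMap.exists_leftInverse_of_injective A.toLinearMap
    (LinearMap.ker_eq_bot.2 hAinj)
  have hgA : ∀ z : ℂ, g (A z) = z := fun z => by
    have := LinearMap.congr_fun hg z
    simpa using this
  have hAg : ∀ q ∈ sliceL I, A (g q) = q := by
    rintro q ⟨x, y, rfl⟩
    have : ((x : ℍ[ℝ]) + y • I) = A ⟨x, y⟩ := by rw [hAz]
    rw [this, hgA]
  have hgcont : Continuous g := g.continuous_of_finiteDimensional
  have hAcont : Continuous A := A.toLinearMap.continuous_of_finiteDimensional
  letI : Module ℂ ℍ[ℝ] := Module.compHom ℍ[ℝ] A.toRingHom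
  have hsmul : ∀ (z : ℂ) (q : ℍ[ℝ]), z • q = A z * q := fun z q => rfl
  letI : NormedSpace ℂ ℍ[ℝ] :=
    ⟨fun z q => le_of_eq (by rw [hsmul, norm_mul, hAnorm])⟩
  letI : IsScalarTower ℝ ℂ ℍ[ℝ] := ⟨fun r z q => by
    rw [hsmul, hsmul, show A (r • z) = r • A z from A.toLinearMap.map_smul r z,
      smul_mul_assoc]⟩
  set F : ℂ → ℍ[ℝ] := fun z => f (A z) with hFdef
  set U : Set ℂ := ⇑A ⁻¹' Ω with hUdef
  have hUopen : IsOpen U := hΩo.preimage hAcont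
  set U2 : Set (ℝ × ℝ) := {p : ℝ × ℝ | ((p.1 : ℍ[ℝ]) + p.2 • I) ∈ Ω} with hU2def
  have hU2open : IsOpen U2 := by
    have : Continuous (fun p : ℝ × ℝ => ((p.1 : ℍ[ℝ]) + p.2 • I)) :=
      ((Quaternion.continuous_coe.comp continuous_fst).add
        (continuous_snd.smul continuous_const))
    exact hΩo.preimage this
  have hdiff : ∀ z ∈ U, HasFDerivAt F
      ((1 : ℂ →L[ℂ] ℂ).smulRight (fx z.re z.im)) z := by
    intro z hz
    have hmem : ((z.re : ℍ[ℝ]) + z.im • I) ∈ Ω := by rw [← hAz]; exact hz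
    have h1 : HasFDerivAt (fun p : ℝ × ℝ => f ((p.1 : ℍ[ℝ]) + p.2 • I))
        ((ContinuousLinearMap.fst ℝ ℝ ℝ).smulRight (fx z.re z.im)
          + (ContinuousLinearMap.snd ℝ ℝ ℝ).smulRight (fy z.re z.im)) (z.re, z.im) := by
      refine hasFDerivAt_of_partials _ fx fy U2 hU2open ?_ ?_ ?_ hmem
      · exact fun p hp => hdx p.1 p.2 hp
      · exact fun p hp => hdy p.1 p.2 hp
      · exact hcx
    have h2 : HasFDerivAt (fun w : ℂ => f ((w.re : ℍ[ℝ]) + w.im • I))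
        (((ContinuousLinearMap.fst ℝ ℝ ℝ).smulRight (fx z.re z.im)
          + (ContinuousLinearMap.snd ℝ ℝ ℝ).smulRight (fy z.re z.im)).comp
          (Complex.equivRealProdCLM : ℂ →L[ℝ] ℝ × ℝ)) z :=
      by have := h1.comp z (Complex.equivRealProdCLM : ℂ →L[ℝ] ℝ × ℝ).hasFDerivAt; exact this
    have hFeq : (fun w : ℂ => f ((w.re : ℍ[ℝ]) + w.im • I)) = F := by
      funext w; show f ((w.re : ℍ[ℝ]) + w.im • I) = f (A w); rw [hAz]
    rw [hFeq] at h2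
    refine hasFDerivAt_of_restrictScalars (𝕜 := ℝ) h2 ?_
    have h0 := hcr z.re z.im hmem
    have hdq : fy z.re z.im = I * fx z.re z.im := by
      have h1' : I * (fx z.re z.im + I * fy z.re z.im) = 0 := by rw [h0, mul_zero]
      rw [mul_add, ← mul_assoc, hII, neg_one_mul] at h1'
      have h2' : I * fx z.re z.im - fy z.re z.im = 0 := by
        rw [sub_eq_add_neg]; exact h1'
      exact (sub_eq_zero.1 h2').symm
    refine ContinuousLinearMap.ext fun h => ?_
    show h • fx z.re z.im = _
    rw [hsmul, hAz, add_mul, Quaternion.coe_mul_eq_smul, smul_mul_assoc, ← hdq]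
    simp [Complex.equivRealProdCLM_apply]
  have hdiffOn : DifferentiableOn ℂ F U := fun z hz =>
    ((hdiff z hz).differentiableAt).differentiableWithinAt
  have hanal : AnalyticOnNhd ℂ F U := hdiffOn.analyticOnNhd hUopen
  have hUeq : U = ⇑g '' (Ω ∩ sliceL I) := by
    apply Set.Subset.antisymm
    · intro z hz
      exact ⟨A z, ⟨hz, ⟨z.re, z.im, (hAz z).symm⟩⟩, hgA z⟩
    · rintro z ⟨q, ⟨hqΩ, hqs⟩, rfl⟩
      show A (g q) ∈ Ω
      rw [hAg q hqs]; exact hqΩ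
  have hUconn : IsConnected U := by
    rw [hUeq]; exact hconn.image _ hgcont.continuousOn
  obtain ⟨hps, hpΩ⟩ := hp
  set z₀ : ℂ := g p with hz₀def
  have hpz : A z₀ = p := hAg p hps
  have hz₀U : z₀ ∈ U := by
    show A z₀ ∈ Ω; rw [hpz]; exact hpΩ
  have hfreq : ∃ᶠ z in nhdsWithin z₀ {z₀}ᶜ, F z = 0 := by
    rw [frequently_nhdsWithin_iff, Filter.frequently_iff]
    intro V hV
    have hV' : ⇑g ⁻¹' V ∈ nhds p := by
      refine hgcont.continuousAt.preimage_mem_nhds ?_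
      rw [← hz₀def] at *
      exact hV
    obtain ⟨q, ⟨hqV, hqS⟩, hqne⟩ := accPt_iff_nhds.1 hacc (⇑g ⁻¹' V) hV'
    obtain ⟨hqs, hqΩ, hqf⟩ := hqS
    refine ⟨g q, hqV, ?_, ?_⟩
    · show f (A (g q)) = 0
      rw [hAg q hqs]; exact hqf
    · intro hcontra
      apply hqne
      have : A (g q) = A z₀ := by rw [hcontra]
      rw [hAg q hqs, hpz] at this
      exact this
  have hzero : Set.EqOn F 0 U :=
    hanal.eqOn_zero_of_preconnected_of_frequently_eq_zero hUconn.isPreconnected hz₀U hfreq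
  rintro q ⟨hqΩ, hqs⟩
  have hgqU : g q ∈ U := by
    show A (g q) ∈ Ω; rw [hAg q hqs]; exact hqΩ
  have := hzero hgqU
  simpa [hFdef, hAg q hqs] using this

end Slice

/-- Identity Principle for slice regular functions on s-domains. -/
theorem identity_principle
    (Ω : Set ℍ[ℝ]) (hΩ : IsSDomain Ω)
    (f : ℍ[ℝ] → ℍ[ℝ]) (hf : SliceRegularOn f Ω)
    (I : ℍ[ℝ]) (hI : I ∈ SpH)
    (p : ℍ[ℝ]) (hp : p ∈ sliceL I ∩ Ω)
    (hacc : AccPt p (Filter.principal (sliceL I ∩ {q ∈ Ω | f q = 0}))) :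
    ∀ q ∈ Ω, f q = 0 := by
  obtain ⟨hopen, _, ⟨x₀, hx₀⟩, hslices⟩ := hΩ
  have step1 : ∀ q ∈ Ω ∩ sliceL I, f q = 0 :=
    slice_zero Ω hopen f I hI (hf I hI) (hslices I hI) p hp hacc
  obtain ⟨ε, hε, hball⟩ := Metric.isOpen_iff.1 hopen _ hx₀
  have hdistc : ∀ t : ℝ, dist ((t : ℍ[ℝ])) ((x₀ : ℍ[ℝ])) = dist t x₀ := by
    intro t
    rw [dist_eq_norm, ← Quaternion.coe_sub, Quaternion.norm_coe, ← dist_eq_norm]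
  have hrealzero : ∀ t : ℝ, dist t x₀ < ε → ((t : ℍ[ℝ]) ∈ Ω ∧ f (t : ℍ[ℝ]) = 0) := by
    intro t ht
    have htΩ : (t : ℍ[ℝ]) ∈ Ω := hball (by rw [Metric.mem_ball, hdistc]; exact ht)
    exact ⟨htΩ, step1 _ ⟨htΩ, t, 0, by simp⟩⟩
  have hJs : ∀ J ∈ SpH, ∀ q ∈ Ω ∩ sliceL J, f q = 0 := by
    intro J hJ
    refine slice_zero Ω hopen f J hJ (hf J hJ) (hslices J hJ) (x₀ : ℍ[ℝ])
      ⟨⟨x₀, 0, by simp⟩, hx₀⟩ ?_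
    rw [accPt_iff_nhds]
    intro V hV
    have hV' : (fun t : ℝ => (t : ℍ[ℝ])) ⁻¹' V ∈ nhds x₀ :=
      Quaternion.continuous_coe.continuousAt.preimage_mem_nhds hV
    obtain ⟨δ, hδ, hsub⟩ := Metric.mem_nhds_iff.1 hV'
    set t : ℝ := x₀ + min δ ε / 2 with htdef
    have hmin : 0 < min δ ε := lt_min hδ hε
    have hdt : dist t x₀ = min δ ε / 2 := by
      rw [htdef, dist_eq_norm, add_sub_cancel_left, Real.norm_eq_abs,
        abs_of_pos (by linarith)]
    have hdtδ : dist t x₀ < δ := by rw [hdt]; have := min_le_left δ ε; linarith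
    have hdtε : dist t x₀ < ε := by rw [hdt]; have := min_le_right δ ε; linarith
    obtain ⟨htΩ, htf⟩ := hrealzero t hdtε
    refine ⟨(t : ℍ[ℝ]), ⟨hsub (by rw [Metric.mem_ball]; exact hdtδ),
      ⟨⟨t, 0, by simp⟩, htΩ, htf⟩⟩, ?_⟩
    intro hcontra
    have : t = x₀ := Quaternion.coe_injective hcontra
    rw [htdef] at this
    linarith [this, hmin]
  intro q hq
  have hexists : ∃ J ∈ SpH, q ∈ sliceL J := by
    by_cases him : q.im = 0
    · refine ⟨(⟨0, 1, 0, 0⟩ : ℍ[ℝ]), ⟨rfl, ?_⟩, q.re, 0, ?_⟩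
      · have h1 : Quaternion.normSq (⟨0, 1, 0, 0⟩ : ℍ[ℝ]) = 1 := by
          erw [Quaternion.normSq_def']; norm_num
        have h2 := Quaternion.normSq_eq_norm_mul_self (⟨0, 1, 0, 0⟩ : ℍ[ℝ])
        refine (mul_self_inj (norm_nonneg _) zero_le_one).1 ?_
        rw [← h2, h1]; norm_num
      · erw [zero_smul, add_zero]
        conv_lhs => rw [← Quaternion.re_add_im q]
        rw [him, add_zero]
    · have hvn : ‖q.im‖ ≠ 0 := norm_ne_zero_iff.2 him
      refine ⟨‖q.im‖⁻¹ • q.im, ⟨?_, ?_⟩, q.re, ‖q.im‖, ?_⟩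
      · show (‖q.im‖⁻¹ • q.im).re = 0
        simp
      · rw [norm_smul, norm_inv, norm_norm]
        field_simp
      · rw [smul_smul, mul_inv_cancel₀ hvn, one_smul]
        exact (Quaternion.re_add_im q).symm
  obtain ⟨J, hJ, hqJ⟩ := hexists
  exact hJs J hJ q ⟨hq, hqJ⟩
end
end
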